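/- With E, B the fields of a uniformly moving point charge as above (V < c, γ = (1−V²/c²)^{-1/2}), the source-free Maxwell equations hold off the trajectory: ∇·E = 0, ∇·B = 0, ∇×E = −∂ₜB, and c²∇×B = ∂ₜE at every (r,t) with r ≠ (x₀+Vt, y₀, z₀). -/

import Mathlib

noncomputable section

abbrev V3 : Type := Fin 3 → ℝ

/-- Partial derivative ∂ⱼ Fᵢ at r. -/
def pd (F : V3 → V3) (r : V3) (i j : Fin 3) : ℝ :=
  fderiv ℝ F r (Pi.single j 1) i

/-- Spatial Jacobian matrix of a vector field on ℝ³. -/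
def jac (F : V3 → V3) (r : V3) : Matrix (Fin 3) (Fin 3) ℝ :=
  fun i j => pd F r i j

/-- Divergence of a vector field on ℝ³. -/
def div3 (F : V3 → V3) (r : V3) : ℝ := ∑ i, pd F r i i

/-- Curl of a vector field on ℝ³. -/
def curl3 (F : V3 → V3) (r : V3) : V3 :=
  ![pd F r 2 1 - pd F r 1 2, pd F r 0 2 - pd F r 2 0, pd F r 1 0 - pd F r 0 1]

abbrev prj (j : Fin 3) : V3 →L[ℝ] ℝ := ContinuousLinearMap.proj j

lemma pd_eq_fderiv (F : V3 → V3) (r : V3)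
    (h : ∀ i, DifferentiableAt ℝ (fun x => F x i) r) (i j : Fin 3) :
    pd F r i j = fderiv ℝ (fun x => F x i) r (Pi.single j 1) := by
  have hF : HasFDerivAt F
      (ContinuousLinearMap.pi fun i => fderiv ℝ (fun x => F x i) r) r :=
    hasFDerivAt_pi.2 fun i => (h i).hasFDerivAt
  rw [pd, hF.fderiv]; rfl

set_option maxHeartbeats 2000000 in
theorem stmt_10 (Vv c q x₀ y₀ z₀ γ : ℝ) (hV : 0 < Vv) (hVc : Vv < c)
    (hγ : γ = (1 - Vv ^ 2 / c ^ 2) ^ (-(1 / 2) : ℝ))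
    (E B : V3 → ℝ → V3)
    (hE : ∀ (r : V3) (t : ℝ),
      E r t = ![q * (γ * (r 0 - x₀ - Vv * t)) /
                  ((γ * (r 0 - x₀ - Vv * t)) ^ 2 + (r 1 - y₀) ^ 2 + (r 2 - z₀) ^ 2) ^ ((3:ℝ)/2),
                γ * q * (r 1 - y₀) /
                  ((γ * (r 0 - x₀ - Vv * t)) ^ 2 + (r 1 - y₀) ^ 2 + (r 2 - z₀) ^ 2) ^ ((3:ℝ)/2),
                γ * q * (r 2 - z₀) /
                  ((γ * (r 0 - x₀ - Vv * t)) ^ 2 + (r 1 - y₀) ^ 2 + (r 2 - z₀) ^ 2) ^ ((3:ℝ)/2)])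
    (hB : ∀ (r : V3) (t : ℝ),
      B r t = ![0, -Vv * E r t 2 / c ^ 2, Vv * E r t 1 / c ^ 2]) :
    ∀ (r : V3) (t : ℝ), r ≠ ![x₀ + Vv * t, y₀, z₀] →
      div3 (fun x => E x t) r = 0 ∧
      div3 (fun x => B x t) r = 0 ∧
      curl3 (fun x => E x t) r = -deriv (B r) t ∧
      c ^ 2 • curl3 (fun x => B x t) r = deriv (E r) t := by
  intro r t hr
  have hc : (0:ℝ) < c := hV.trans hVc
  have hc2 : (c:ℝ)^2 ≠ 0 := by positivity
  have hw : (0:ℝ) < 1 - Vv ^ 2 / c ^ 2 := by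
    rw [sub_pos, div_lt_one (by positivity)]
    nlinarith
  have hγpos : 0 < γ := hγ ▸ Real.rpow_pos_of_pos hw _
  have hγsq : γ ^ 2 = (1 - Vv ^ 2 / c ^ 2)⁻¹ := by
    rw [hγ, ← Real.rpow_natCast ((1 - Vv ^ 2 / c ^ 2) ^ (-(1/2) : ℝ)) 2,
      ← Real.rpow_mul hw.le]
    norm_num [Real.rpow_neg_one]
  have hcV : c ^ 2 - Vv ^ 2 ≠ 0 := by nlinarith
  have hγc : γ ^ 2 * (c ^ 2 - Vv ^ 2) = c ^ 2 := by
    rw [hγsq]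
    field_simp
  set X := r 0 - x₀ - Vv * t with hX
  set a := r 1 - y₀ with ha
  set b := r 2 - z₀ with hb
  have hSne : (γ * X) ^ 2 + a ^ 2 + b ^ 2 ≠ 0 := by
    intro h
    have hX0 : γ * X = 0 := by nlinarith [sq_nonneg (γ * X), sq_nonneg a, sq_nonneg b]
    have ha0 : a = 0 := by nlinarith [sq_nonneg (γ * X), sq_nonneg a, sq_nonneg b]
    have hb0 : b = 0 := by nlinarith [sq_nonneg (γ * X), sq_nonneg a, sq_nonneg b]
    have hX0' : X = 0 := by
      rcases mul_eq_zero.1 hX0 with h' | h'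
      · exact absurd h' hγpos.ne'
      · exact h'
    apply hr
    funext i
    fin_cases i
    · show r 0 = x₀ + Vv * t
      have := hX0'
      rw [hX] at this; linarith
    · show r 1 = y₀
      rw [ha] at ha0; linarith
    · show r 2 = z₀
      rw [hb] at hb0; linarith
  have hSpos : (0:ℝ) < (γ * X) ^ 2 + a ^ 2 + b ^ 2 :=
    lt_of_le_of_ne (by positivity) (Ne.symm hSne)
  set P3 : ℝ := ((γ * X) ^ 2 + a ^ 2 + b ^ 2) ^ (-(3/2) : ℝ) with hP3
  set P5 : ℝ := ((γ * X) ^ 2 + a ^ 2 + b ^ 2) ^ (-(3/2) - 1 : ℝ) with hP5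
  have hP35 : P3 = ((γ * X) ^ 2 + a ^ 2 + b ^ 2) * P5 := by
    have h' := Real.rpow_add hSpos 1 (-(3/2) - 1)
    rw [Real.rpow_one] at h'
    rw [hP3, hP5, ← h']
    norm_num
  -- spatial derivatives of E components
  have hu' : HasFDerivAt (fun x : V3 => γ * (x 0 - x₀ - Vv * t)) (γ • prj 0) r :=
    (((hasFDerivAt_apply 0 r).sub_const x₀).sub_const (Vv * t)).const_mul γ
  have ha' : HasFDerivAt (fun x : V3 => x 1 - y₀) (prj 1) r :=
    (hasFDerivAt_apply 1 r).sub_const y₀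
  have hb' : HasFDerivAt (fun x : V3 => x 2 - z₀) (prj 2) r :=
    (hasFDerivAt_apply 2 r).sub_const z₀
  have hg := (((hasDerivAt_pow 2 (γ * X)).comp_hasFDerivAt r hu').add
      ((hasDerivAt_pow 2 a).comp_hasFDerivAt r ha')).add
      ((hasDerivAt_pow 2 b).comp_hasFDerivAt r hb')
  have hP := hg.rpow_const (p := (-(3/2) : ℝ)) (Or.inl hSne)
  -- component 0
  have hF0 : HasFDerivAt
      (fun x : V3 => q * (γ * (x 0 - x₀ - Vv * t)) *
        ((γ * (x 0 - x₀ - Vv * t)) ^ 2 + (x 1 - y₀) ^ 2 + (x 2 - z₀) ^ 2) ^ (-(3/2) : ℝ))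
      ((q * γ * P3 - 3 * q * γ * (γ * X) ^ 2 * P5) • prj 0
        + (-3 * q * (γ * X) * a * P5) • prj 1
        + (-3 * q * (γ * X) * b * P5) • prj 2) r := by
    refine ((hu'.const_mul q).mul hP).congr_fderiv ?_
    ext v
    simp [hP3, hP5, smul_eq_mul]
    ring
  have hF1 : HasFDerivAt
      (fun x : V3 => γ * q * (x 1 - y₀) *
        ((γ * (x 0 - x₀ - Vv * t)) ^ 2 + (x 1 - y₀) ^ 2 + (x 2 - z₀) ^ 2) ^ (-(3/2) : ℝ))
      ((-3 * γ * q * a * (γ * X) * γ * P5) • prj 0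
        + (γ * q * P3 - 3 * γ * q * a ^ 2 * P5) • prj 1
        + (-3 * γ * q * a * b * P5) • prj 2) r := by
    refine ((ha'.const_mul (γ * q)).mul hP).congr_fderiv ?_
    ext v
    simp [hP3, hP5, smul_eq_mul]
    ring
  have hF2 : HasFDerivAt
      (fun x : V3 => γ * q * (x 2 - z₀) *
        ((γ * (x 0 - x₀ - Vv * t)) ^ 2 + (x 1 - y₀) ^ 2 + (x 2 - z₀) ^ 2) ^ (-(3/2) : ℝ))
      ((-3 * γ * q * b * (γ * X) * γ * P5) • prj 0
        + (-3 * γ * q * b * a * P5) • prj 1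
        + (γ * q * P3 - 3 * γ * q * b ^ 2 * P5) • prj 2) r := by
    refine ((hb'.const_mul (γ * q)).mul hP).congr_fderiv ?_
    ext v
    simp [hP3, hP5, smul_eq_mul]
    ring
  -- rewrite E components into rpow form
  have hEfun0 : (fun x : V3 => E x t 0) =
      fun x : V3 => q * (γ * (x 0 - x₀ - Vv * t)) *
        ((γ * (x 0 - x₀ - Vv * t)) ^ 2 + (x 1 - y₀) ^ 2 + (x 2 - z₀) ^ 2) ^ (-(3/2) : ℝ) := by
    funext x
    rw [hE]
    show q * (γ * (x 0 - x₀ - Vv * t)) /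
        ((γ * (x 0 - x₀ - Vv * t)) ^ 2 + (x 1 - y₀) ^ 2 + (x 2 - z₀) ^ 2) ^ ((3:ℝ)/2) = _
    rw [div_eq_mul_inv, ← Real.rpow_neg (by positivity)]
  have hEfun1 : (fun x : V3 => E x t 1) =
      fun x : V3 => γ * q * (x 1 - y₀) *
        ((γ * (x 0 - x₀ - Vv * t)) ^ 2 + (x 1 - y₀) ^ 2 + (x 2 - z₀) ^ 2) ^ (-(3/2) : ℝ) := by
    funext x
    rw [hE]
    show γ * q * (x 1 - y₀) /
        ((γ * (x 0 - x₀ - Vv * t)) ^ 2 + (x 1 - y₀) ^ 2 + (x 2 - z₀) ^ 2) ^ ((3:ℝ)/2) = _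
    rw [div_eq_mul_inv, ← Real.rpow_neg (by positivity)]
  have hEfun2 : (fun x : V3 => E x t 2) =
      fun x : V3 => γ * q * (x 2 - z₀) *
        ((γ * (x 0 - x₀ - Vv * t)) ^ 2 + (x 1 - y₀) ^ 2 + (x 2 - z₀) ^ 2) ^ (-(3/2) : ℝ) := by
    funext x
    rw [hE]
    show γ * q * (x 2 - z₀) /
        ((γ * (x 0 - x₀ - Vv * t)) ^ 2 + (x 1 - y₀) ^ 2 + (x 2 - z₀) ^ 2) ^ ((3:ℝ)/2) = _
    rw [div_eq_mul_inv, ← Real.rpow_neg (by positivity)]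
  have hE0' : HasFDerivAt (fun x : V3 => E x t 0) _ r := hEfun0 ▸ hF0
  have hE1' : HasFDerivAt (fun x : V3 => E x t 1) _ r := hEfun1 ▸ hF1
  have hE2' : HasFDerivAt (fun x : V3 => E x t 2) _ r := hEfun2 ▸ hF2
  have hdiffE : ∀ i, DifferentiableAt ℝ (fun x : V3 => E x t i) r := by
    intro i
    fin_cases i
    exacts [hE0'.differentiableAt, hE1'.differentiableAt, hE2'.differentiableAt]
  -- B components
  have hBfun0 : (fun x : V3 => B x t 0) = fun _ : V3 => (0:ℝ) := by
    funext x; rw [hB]; simp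
  have hBfun1 : (fun x : V3 => B x t 1) = fun x : V3 => -Vv * E x t 2 / c ^ 2 := by
    funext x; rw [hB]; simp
  have hBfun2 : (fun x : V3 => B x t 2) = fun x : V3 => Vv * E x t 1 / c ^ 2 := by
    funext x; rw [hB]; simp
  have hB0' : HasFDerivAt (fun x : V3 => B x t 0) (0 : V3 →L[ℝ] ℝ) r := by
    rw [hBfun0]; exact hasFDerivAt_const 0 r
  have hB1' : HasFDerivAt (fun x : V3 => B x t 1)
      ((-Vv / c ^ 2) • ((-3 * γ * q * b * (γ * X) * γ * P5) • prj 0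
        + (-3 * γ * q * b * a * P5) • prj 1
        + (γ * q * P3 - 3 * γ * q * b ^ 2 * P5) • prj 2)) r := by
    rw [hBfun1]
    have h2 := (hE2'.const_mul (-Vv)).mul_const ((c ^ 2)⁻¹)
    refine h2.congr_fderiv ?_
    ext v
    simp [smul_eq_mul]
    ring
  have hB2' : HasFDerivAt (fun x : V3 => B x t 2)
      ((Vv / c ^ 2) • ((-3 * γ * q * a * (γ * X) * γ * P5) • prj 0
        + (γ * q * P3 - 3 * γ * q * a ^ 2 * P5) • prj 1
        + (-3 * γ * q * a * b * P5) • prj 2)) r := by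
    rw [hBfun2]
    have h1 := (hE1'.const_mul Vv).mul_const ((c ^ 2)⁻¹)
    refine h1.congr_fderiv ?_
    ext v
    simp [smul_eq_mul]
    ring
  have hdiffB : ∀ i, DifferentiableAt ℝ (fun x : V3 => B x t i) r := by
    intro i
    fin_cases i
    exacts [hB0'.differentiableAt, hB1'.differentiableAt, hB2'.differentiableAt]
  -- pd values for E
  have e0 : ∀ j, pd (fun x => E x t) r 0 j =
      ((q * γ * P3 - 3 * q * γ * (γ * X) ^ 2 * P5) • prj 0
        + (-3 * q * (γ * X) * a * P5) • prj 1
        + (-3 * q * (γ * X) * b * P5) • prj 2) (Pi.single j 1) := fun j => by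
    rw [pd_eq_fderiv _ _ hdiffE, hE0'.fderiv]
  have e1 : ∀ j, pd (fun x => E x t) r 1 j =
      ((-3 * γ * q * a * (γ * X) * γ * P5) • prj 0
        + (γ * q * P3 - 3 * γ * q * a ^ 2 * P5) • prj 1
        + (-3 * γ * q * a * b * P5) • prj 2) (Pi.single j 1) := fun j => by
    rw [pd_eq_fderiv _ _ hdiffE, hE1'.fderiv]
  have e2 : ∀ j, pd (fun x => E x t) r 2 j =
      ((-3 * γ * q * b * (γ * X) * γ * P5) • prj 0
        + (-3 * γ * q * b * a * P5) • prj 1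
        + (γ * q * P3 - 3 * γ * q * b ^ 2 * P5) • prj 2) (Pi.single j 1) := fun j => by
    rw [pd_eq_fderiv _ _ hdiffE, hE2'.fderiv]
  have f0 : ∀ j, pd (fun x => B x t) r 0 j = 0 := fun j => by
    rw [pd_eq_fderiv _ _ hdiffB, hB0'.fderiv]; simp
  have f1 : ∀ j, pd (fun x => B x t) r 1 j =
      ((-Vv / c ^ 2) • ((-3 * γ * q * b * (γ * X) * γ * P5) • prj 0
        + (-3 * γ * q * b * a * P5) • prj 1
        + (γ * q * P3 - 3 * γ * q * b ^ 2 * P5) • prj 2)) (Pi.single j 1) := fun j => by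
    rw [pd_eq_fderiv _ _ hdiffB, hB1'.fderiv]
  have f2 : ∀ j, pd (fun x => B x t) r 2 j =
      ((Vv / c ^ 2) • ((-3 * γ * q * a * (γ * X) * γ * P5) • prj 0
        + (γ * q * P3 - 3 * γ * q * a ^ 2 * P5) • prj 1
        + (-3 * γ * q * a * b * P5) • prj 2)) (Pi.single j 1) := fun j => by
    rw [pd_eq_fderiv _ _ hdiffB, hB2'.fderiv]
  -- time derivatives
  have hut : HasDerivAt (fun s : ℝ => γ * (r 0 - x₀ - Vv * s)) (γ * -(Vv * 1)) t := by
    exact (((hasDerivAt_id t).const_mul Vv).const_sub (r 0 - x₀)).const_mul γ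
  have hgt : HasDerivAt
      (fun s : ℝ => (γ * (r 0 - x₀ - Vv * s)) ^ 2 + (r 1 - y₀) ^ 2 + (r 2 - z₀) ^ 2)
      ((2 : ℕ) * (γ * X) ^ 1 * (γ * -(Vv * 1))) t := by
    exact ((hut.pow 2).add_const ((r 1 - y₀) ^ 2)).add_const ((r 2 - z₀) ^ 2)
  have hPt := hgt.rpow_const (p := (-(3/2) : ℝ)) (Or.inl hSne)
  have hDE0 : HasDerivAt (fun s : ℝ => E r s 0)
      (-Vv * (q * γ * P3 - 3 * q * γ * (γ * X) ^ 2 * P5)) t := by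
    have heq : (fun s : ℝ => E r s 0) = fun s : ℝ =>
        q * (γ * (r 0 - x₀ - Vv * s)) *
          ((γ * (r 0 - x₀ - Vv * s)) ^ 2 + (r 1 - y₀) ^ 2 + (r 2 - z₀) ^ 2) ^ (-(3/2) : ℝ) := by
      funext s
      rw [hE]
      show q * (γ * (r 0 - x₀ - Vv * s)) /
          ((γ * (r 0 - x₀ - Vv * s)) ^ 2 + (r 1 - y₀) ^ 2 + (r 2 - z₀) ^ 2) ^ ((3:ℝ)/2) = _
      rw [div_eq_mul_inv, ← Real.rpow_neg (by positivity)]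
    rw [heq]
    refine ((hut.const_mul q).mul hPt).congr_deriv ?_
    simp [hP3, hP5]
    ring
  have hDE1 : HasDerivAt (fun s : ℝ => E r s 1)
      (-Vv * (-3 * γ * q * a * (γ * X) * γ * P5)) t := by
    have heq : (fun s : ℝ => E r s 1) = fun s : ℝ =>
        γ * q * (r 1 - y₀) *
          ((γ * (r 0 - x₀ - Vv * s)) ^ 2 + (r 1 - y₀) ^ 2 + (r 2 - z₀) ^ 2) ^ (-(3/2) : ℝ) := by
      funext s
      rw [hE]
      show γ * q * (r 1 - y₀) /
          ((γ * (r 0 - x₀ - Vv * s)) ^ 2 + (r 1 - y₀) ^ 2 + (r 2 - z₀) ^ 2) ^ ((3:ℝ)/2) = _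
      rw [div_eq_mul_inv, ← Real.rpow_neg (by positivity)]
    rw [heq]
    refine (hPt.const_mul (γ * q * (r 1 - y₀))).congr_deriv ?_
    simp [hP3, hP5, ← ha]
    ring
  have hDE2 : HasDerivAt (fun s : ℝ => E r s 2)
      (-Vv * (-3 * γ * q * b * (γ * X) * γ * P5)) t := by
    have heq : (fun s : ℝ => E r s 2) = fun s : ℝ =>
        γ * q * (r 2 - z₀) *
          ((γ * (r 0 - x₀ - Vv * s)) ^ 2 + (r 1 - y₀) ^ 2 + (r 2 - z₀) ^ 2) ^ (-(3/2) : ℝ) := by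
      funext s
      rw [hE]
      show γ * q * (r 2 - z₀) /
          ((γ * (r 0 - x₀ - Vv * s)) ^ 2 + (r 1 - y₀) ^ 2 + (r 2 - z₀) ^ 2) ^ ((3:ℝ)/2) = _
      rw [div_eq_mul_inv, ← Real.rpow_neg (by positivity)]
    rw [heq]
    refine (hPt.const_mul (γ * q * (r 2 - z₀))).congr_deriv ?_
    simp [hP3, hP5, ← hb]
    ring
  have hDB0 : HasDerivAt (fun s : ℝ => B r s 0) 0 t := by
    have heq : (fun s : ℝ => B r s 0) = fun _ : ℝ => (0:ℝ) := by
      funext s; rw [hB]; simp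
    rw [heq]; exact hasDerivAt_const t 0
  have hDB1 : HasDerivAt (fun s : ℝ => B r s 1)
      (-Vv * (-Vv * (-3 * γ * q * b * (γ * X) * γ * P5)) / c ^ 2) t := by
    have heq : (fun s : ℝ => B r s 1) = fun s : ℝ => -Vv * E r s 2 / c ^ 2 := by
      funext s; rw [hB]; simp
    rw [heq]
    exact (hDE2.const_mul (-Vv)).div_const (c ^ 2)
  have hDB2 : HasDerivAt (fun s : ℝ => B r s 2)
      (Vv * (-Vv * (-3 * γ * q * a * (γ * X) * γ * P5)) / c ^ 2) t := by
    have heq : (fun s : ℝ => B r s 2) = fun s : ℝ => Vv * E r s 1 / c ^ 2 := by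
      funext s; rw [hB]; simp
    rw [heq]
    exact (hDE1.const_mul Vv).div_const (c ^ 2)
  have hDE : HasDerivAt (E r)
      ![-Vv * (q * γ * P3 - 3 * q * γ * (γ * X) ^ 2 * P5),
        -Vv * (-3 * γ * q * a * (γ * X) * γ * P5),
        -Vv * (-3 * γ * q * b * (γ * X) * γ * P5)] t := by
    rw [hasDerivAt_pi]
    intro i
    fin_cases i
    · simpa using hDE0
    · simpa using hDE1
    · simpa using hDE2
  have hDB : HasDerivAt (B r)
      ![0,
        -Vv * (-Vv * (-3 * γ * q * b * (γ * X) * γ * P5)) / c ^ 2,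
        Vv * (-Vv * (-3 * γ * q * a * (γ * X) * γ * P5)) / c ^ 2] t := by
    rw [hasDerivAt_pi]
    intro i
    fin_cases i
    · simpa using hDB0
    · simpa using hDB1
    · simpa using hDB2
  refine ⟨?_, ?_, ?_, ?_⟩
  · rw [div3, Fin.sum_univ_three, e0 0, e1 1, e2 2]
    simp [Pi.single_apply, smul_eq_mul]
    rw [hP35]
    ring
  · rw [div3, Fin.sum_univ_three, f0 0, f1 1, f2 2]
    simp [Pi.single_apply, smul_eq_mul]
    ring
  · rw [hDB.deriv]
    funext i
    fin_cases i
    · show pd (fun x => E x t) r 2 1 - pd (fun x => E x t) r 1 2 = _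
      rw [e2 1, e1 2]
      simp [Pi.single_apply, smul_eq_mul]
      ring
    · show pd (fun x => E x t) r 0 2 - pd (fun x => E x t) r 2 0 = _
      rw [e0 2, e2 0]
      simp [Pi.single_apply, smul_eq_mul]
      field_simp
      linear_combination (q * X * b * P5) * hγc
    · show pd (fun x => E x t) r 1 0 - pd (fun x => E x t) r 0 1 = _
      rw [e1 0, e0 1]
      simp [Pi.single_apply, smul_eq_mul]
      field_simp
      linear_combination (-(q * a * X * P5)) * hγc
  · rw [hDE.deriv]
    funext i
    fin_cases i
    · show c ^ 2 * (pd (fun x => B x t) r 2 1 - pd (fun x => B x t) r 1 2) = _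
      rw [f2 1, f1 2]
      simp [Pi.single_apply, smul_eq_mul]
      rw [hP35]
      field_simp
      ring
    · show c ^ 2 * (pd (fun x => B x t) r 0 2 - pd (fun x => B x t) r 2 0) = _
      rw [f0 2, f2 0]
      simp [Pi.single_apply, smul_eq_mul]
      field_simp
    · show c ^ 2 * (pd (fun x => B x t) r 1 0 - pd (fun x => B x t) r 0 1) = _
      rw [f1 0, f0 1]
      simp [Pi.single_apply, smul_eq_mul]
      field_simp
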